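/- Let m ≥ 3 and let A₁,…,A_m be nonempty compact subsets of ℝ. Suppose q ≥ 1 is an integer and S₁,…,S_s are nonempty subsets of [m] (possibly with repetition) such that each i ∈ [m] belongs to exactly q of the sets S_j. Then q·|∑_{i∈[m]} A_i| ≥ ∑_{j=1}^{s} |∑_{i∈S_j} A_i|. -/

import Mathlib

open MeasureTheory Pointwise Finset ENNReal

/-- Selecting one point from each set: the sum of selected points lies in the pointwise
sum of the sets. -/
lemma IFS_sum_mem_setSum {ι : Type*} (s : Finset ι) (F : ι → Set ℝ) (f : ι → ℝ)
    (hf : ∀ i ∈ s, f i ∈ F i) : (∑ i ∈ s, f i) ∈ ∑ i ∈ s, F i := by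
  induction s using Finset.cons_induction with
  | empty => simpa using Set.zero_mem_zero
  | cons a t ha ih =>
      rw [Finset.sum_cons, Finset.sum_cons]
      exact Set.add_mem_add (hf a (Finset.mem_cons_self a t))
        (ih fun i hi => hf i (Finset.mem_cons_of_mem hi))

/-- Elements of a pointwise sum of sets are bounded by the sums of lower/upper bounds. -/
lemma IFS_setSum_bounds {ι : Type*} (s : Finset ι) (F : ι → Set ℝ) (lo hi : ι → ℝ)
    (hlo : ∀ i ∈ s, ∀ x ∈ F i, lo i ≤ x) (hhi : ∀ i ∈ s, ∀ x ∈ F i, x ≤ hi i) :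
    ∀ x ∈ ∑ i ∈ s, F i, (∑ i ∈ s, lo i) ≤ x ∧ x ≤ ∑ i ∈ s, hi i := by
  induction s using Finset.cons_induction with
  | empty =>
      intro x hx
      rw [Finset.sum_empty] at hx
      rcases Set.mem_zero.mp hx with rfl
      simp
  | cons a t ha ih =>
      intro x hx
      rw [Finset.sum_cons] at hx
      rcases Set.mem_add.mp hx with ⟨y, hy, z, hz, rfl⟩
      have h1 := hlo a (Finset.mem_cons_self a t) y hy
      have h2 := hhi a (Finset.mem_cons_self a t) y hy
      have h3 := ih (fun i hi => hlo i (Finset.mem_cons_of_mem hi))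
        (fun i hi => hhi i (Finset.mem_cons_of_mem hi)) z hz
      rw [Finset.sum_cons, Finset.sum_cons]
      exact ⟨by linarith [h3.1], by linarith [h3.2]⟩

/-- The threshold function: partial sums switching from `β` (below `i`) to `μ` (at and above). -/
noncomputable def IFS_cS {m : ℕ} (β μ : Fin m → ℝ) (s : Finset (Fin m)) (i : Fin m) : ℝ :=
  ∑ i' ∈ s, if i' < i then β i' else μ i'

/-- Coverage lemma: the half-open interval from the min-sum to the max-sum is covered by
the per-element segments. -/
lemma IFS_cover {m : ℕ} (β μ : Fin m → ℝ) (s : Finset (Fin m)) :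
    ∀ x : ℝ, x ∈ Set.Ioc (∑ i ∈ s, μ i) (∑ i ∈ s, β i) →
      ∃ i ∈ s, x ∈ Set.Ioc (IFS_cS β μ s i) (IFS_cS β μ s i + (β i - μ i)) := by
  induction s using Finset.induction_on_max with
  | empty =>
      intro x hx
      rw [Finset.sum_empty, Finset.sum_empty] at hx
      exact absurd hx.2 (not_le.mpr hx.1)
  | insert a t hmax ih =>
      have hat : a ∉ t := fun h => lt_irrefl a (hmax a h)
      intro x hx
      rw [Finset.sum_insert hat, Finset.sum_insert hat] at hx
      by_cases hcase : μ a + ∑ i ∈ t, β i < x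
      · refine ⟨a, Finset.mem_insert_self a t, ?_, ?_⟩
        · have : IFS_cS β μ (insert a t) a = μ a + ∑ i ∈ t, β i := by
            rw [IFS_cS, Finset.sum_insert hat, if_neg (lt_irrefl a)]
            congr 1
            exact Finset.sum_congr rfl fun i hi => if_pos (hmax i hi)
          rw [this]; exact hcase
        · have : IFS_cS β μ (insert a t) a + (β a - μ a) = β a + ∑ i ∈ t, β i := by
            rw [IFS_cS, Finset.sum_insert hat, if_neg (lt_irrefl a)]
            have : (∑ i' ∈ t, if i' < a then β i' else μ i') = ∑ i ∈ t, β i :=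
              Finset.sum_congr rfl fun i hi => if_pos (hmax i hi)
            rw [this]; ring
          rw [this]; exact hx.2
      · push_neg at hcase
        have hy : x - μ a ∈ Set.Ioc (∑ i ∈ t, μ i) (∑ i ∈ t, β i) :=
          ⟨by linarith [hx.1], by linarith⟩
        rcases ih (x - μ a) hy with ⟨i, hit, h1, h2⟩
        refine ⟨i, Finset.mem_insert_of_mem hit, ?_, ?_⟩
        · have : IFS_cS β μ (insert a t) i = μ a + IFS_cS β μ t i := by
            rw [IFS_cS, IFS_cS, Finset.sum_insert hat, if_neg (not_lt.mpr (hmax i hit).le)]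
          rw [this]; linarith
        · have : IFS_cS β μ (insert a t) i = μ a + IFS_cS β μ t i := by
            rw [IFS_cS, IFS_cS, Finset.sum_insert hat, if_neg (not_lt.mpr (hmax i hit).le)]
          rw [this]; linarith

/-- Monotonicity: segments are in increasing position. -/
lemma IFS_c_succ_le {m : ℕ} (β μ : Fin m → ℝ) (hβμ : ∀ i, μ i ≤ β i) {i i' : Fin m}
    (h : i < i') :
    IFS_cS β μ Finset.univ i + (β i - μ i) ≤ IFS_cS β μ Finset.univ i' := by
  rw [IFS_cS, IFS_cS]
  have : (∑ i' ∈ Finset.univ, if i' < i then β i' else μ i') + (β i - μ i)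
      = ∑ i'' ∈ Finset.univ, ((if i'' < i then β i'' else μ i'') +
          if i'' = i then β i - μ i else 0) := by
    rw [Finset.sum_add_distrib, Finset.sum_ite_eq' Finset.univ i fun _ => β i - μ i,
      if_pos (Finset.mem_univ i)]
  rw [this]
  apply Finset.sum_le_sum
  intro k _
  by_cases hk : k = i
  · subst hk
    rw [if_neg (lt_irrefl k), if_pos rfl, if_pos h]
    ring_nf
    exact le_refl _
  · rw [if_neg hk, add_zero]
    by_cases hk2 : k < i
    · rw [if_pos hk2, if_pos (hk2.trans h)]
    · by_cases hk3 : k < i'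
      · rw [if_neg hk2, if_pos hk3]; exact hβμ k
      · rw [if_neg hk2, if_neg hk3]

theorem integer_fractional_superadditivity (m s q : ℕ) (hm : 3 ≤ m) (hq : 1 ≤ q)
    (A : Fin m → Set ℝ) (hne : ∀ i, (A i).Nonempty) (hc : ∀ i, IsCompact (A i))
    (S : Fin s → Finset (Fin m)) (hSne : ∀ j, (S j).Nonempty)
    (hcount : ∀ i : Fin m, (Finset.univ.filter (fun j => i ∈ S j)).card = q) :
    (q : ℝ≥0∞) * volume (∑ i : Fin m, A i) ≥ ∑ j : Fin s, volume (∑ i ∈ S j, A i) := by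
  classical
  -- min and max of each set
  set μ : Fin m → ℝ := fun i => sInf (A i) with hμ
  set β : Fin m → ℝ := fun i => sSup (A i) with hβ
  have hμmem : ∀ i, μ i ∈ A i := fun i => (hc i).sInf_mem (hne i)
  have hβmem : ∀ i, β i ∈ A i := fun i => (hc i).sSup_mem (hne i)
  have hμle : ∀ i, ∀ x ∈ A i, μ i ≤ x := fun i x hx => csInf_le (hc i).bddBelow hx
  have hleβ : ∀ i, ∀ x ∈ A i, x ≤ β i := fun i x hx => le_csSup (hc i).bddAbove hx
  have hβμ : ∀ i, μ i ≤ β i := fun i => hμle i (β i) (hβmem i)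
  set U : Set ℝ := ∑ i : Fin m, A i with hU
  -- global segments
  set c : Fin m → ℝ := fun i => IFS_cS β μ Finset.univ i with hc'
  set seg : Fin m → Set ℝ := fun i => Set.Ioc (c i) (c i + (β i - μ i)) with hseg
  -- Step 1: per-j bound : volume (T j) ≤ ∑ i ∈ S j, volume (U ∩ seg i)
  have key : ∀ j : Fin s, volume (∑ i ∈ S j, A i) ≤ ∑ i ∈ S j, volume (U ∩ seg i) := by
    intro j
    set T : Set ℝ := ∑ i ∈ S j, A i with hT
    set cj : Fin m → ℝ := fun i => IFS_cS β μ (S j) i with hcj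
    set τ : Fin m → ℝ := fun i => IFS_cS β μ (S j)ᶜ i with hτ
    have hcsplit : ∀ i, cj i + τ i = c i := fun i =>
      Finset.sum_add_sum_compl (S j) (fun i' => if i' < i then β i' else μ i')
    have hτmem : ∀ i, τ i ∈ ∑ i' ∈ (S j)ᶜ, A i' := by
      intro i
      refine IFS_sum_mem_setSum _ _ _ fun i' _ => ?_
      by_cases h : i' < i
      · simpa [h] using hβmem i'
      · simpa [h] using hμmem i'
    set piece : Fin m → Set ℝ := fun i => T ∩ Set.Ioc (cj i) (cj i + (β i - μ i)) with hp
    -- T is covered by the bottom point and the pieces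
    have hcover : T ⊆ {∑ i ∈ S j, μ i} ∪ ⋃ i ∈ S j, piece i := by
      intro x hx
      have hbd := IFS_setSum_bounds (S j) A μ β (fun i _ => hμle i) (fun i _ => hleβ i) x hx
      rcases eq_or_lt_of_le hbd.1 with heq | hlt
      · exact Set.mem_union_left _ (by simpa using heq.symm)
      · rcases IFS_cover β μ (S j) x ⟨hlt, hbd.2⟩ with ⟨i, hiS, hIoc⟩
        exact Set.mem_union_right _ (Set.mem_biUnion hiS ⟨hx, hIoc⟩)
    -- each translated piece lands in U ∩ seg i
    have hpiece : ∀ i ∈ S j, volume (piece i) ≤ volume (U ∩ seg i) := by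
      intro i hi
      have hsub : τ i +ᵥ piece i ⊆ U ∩ seg i := by
        rintro y hy
        rcases Set.mem_vadd_set.mp hy with ⟨x, hx, rfl⟩
        have hxT : x ∈ T := hx.1
        have hxI : x ∈ Set.Ioc (cj i) (cj i + (β i - μ i)) := hx.2
        constructor
        · -- τ i +ᵥ x = x + τ i ∈ T + rest = U
          have : x + τ i ∈ T + ∑ i' ∈ (S j)ᶜ, A i' := Set.add_mem_add hxT (hτmem i)
          have hUeq : T + ∑ i' ∈ (S j)ᶜ, A i' = U := by
            rw [hT, hU]
            exact Finset.sum_add_sum_compl (S j) A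
          rw [hUeq] at this
          simpa [vadd_eq_add, add_comm] using this
        · -- lands in segment i
          have h1 : cj i + τ i < x + τ i := by linarith [hxI.1]
          have h2 : x + τ i ≤ cj i + (β i - μ i) + τ i := by linarith [hxI.2]
          rw [hseg]
          refine ⟨?_, ?_⟩
          · rw [← hcsplit i]; simpa [vadd_eq_add, add_comm] using h1
          · rw [← hcsplit i]
            have : x + τ i ≤ cj i + τ i + (β i - μ i) := by linarith
            simpa [vadd_eq_add, add_comm] using this
      calc volume (piece i) = volume (τ i +ᵥ piece i) := (measure_vadd (μ := volume) _ _).symm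
        _ ≤ volume (U ∩ seg i) := measure_mono hsub
    -- combine
    calc volume T ≤ volume ({∑ i ∈ S j, μ i} ∪ ⋃ i ∈ S j, piece i) := measure_mono hcover
      _ ≤ volume ({∑ i ∈ S j, μ i} : Set ℝ) + volume (⋃ i ∈ S j, piece i) := measure_union_le _ _
      _ = volume (⋃ i ∈ S j, piece i) := by rw [Real.volume_singleton, zero_add]
      _ ≤ ∑ i ∈ S j, volume (piece i) := measure_biUnion_finset_le _ _
      _ ≤ ∑ i ∈ S j, volume (U ∩ seg i) := Finset.sum_le_sum hpiece
  -- Step 2: double counting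
  have hdouble : ∑ j : Fin s, ∑ i ∈ S j, volume (U ∩ seg i)
      = ∑ i : Fin m, (q : ℝ≥0∞) * volume (U ∩ seg i) := by
    have : ∀ j : Fin s, ∑ i ∈ S j, volume (U ∩ seg i)
        = ∑ i : Fin m, if i ∈ S j then volume (U ∩ seg i) else 0 := by
      intro j
      rw [Finset.sum_ite_mem, Finset.univ_inter]
    rw [Finset.sum_congr rfl fun j _ => this j, Finset.sum_comm]
    apply Finset.sum_congr rfl
    intro i _
    rw [Finset.sum_ite, Finset.sum_const_zero, add_zero, Finset.sum_const, ← hcount i]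
    simp [nsmul_eq_mul]
  -- Step 3: the segments are disjoint, so their U-volumes sum to at most volume U
  have hdisj : ∑ i : Fin m, volume (U ∩ seg i) ≤ volume U := by
    have hmeas : ∀ i : Fin m, MeasurableSet (seg i) := fun i => measurableSet_Ioc
    have hpair : ((Finset.univ : Finset (Fin m)) : Set (Fin m)).PairwiseDisjoint seg := by
      intro i _ i' _ hne'
      have key : ∀ a b : Fin m, a < b → Disjoint (seg a) (seg b) := by
        intro a b hab
        rw [Set.disjoint_left]
        intro x hxa hxb
        have h1 : x ≤ c a + (β a - μ a) := hxa.2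
        have h2 : c b < x := hxb.1
        have h3 := IFS_c_succ_le β μ hβμ hab
        have h1' : x ≤ IFS_cS β μ Finset.univ a + (β a - μ a) := h1
        have h2' : IFS_cS β μ Finset.univ b < x := h2
        linarith
      rcases lt_or_gt_of_ne hne' with h | h
      · exact key i i' h
      · exact (key i' i h).symm
    calc ∑ i : Fin m, volume (U ∩ seg i)
        = ∑ i : Fin m, volume.restrict U (seg i) := by
          apply Finset.sum_congr rfl
          intro i _
          rw [Measure.restrict_apply (hmeas i), Set.inter_comm]
      _ = volume.restrict U (⋃ i ∈ Finset.univ, seg i) := by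
          rw [measure_biUnion_finset hpair fun i _ => hmeas i]
      _ ≤ volume.restrict U Set.univ := measure_mono (Set.subset_univ _)
      _ = volume U := by rw [Measure.restrict_apply_univ]
  -- conclude
  rw [ge_iff_le]
  calc ∑ j : Fin s, volume (∑ i ∈ S j, A i)
      ≤ ∑ j : Fin s, ∑ i ∈ S j, volume (U ∩ seg i) := Finset.sum_le_sum fun j _ => key j
    _ = ∑ i : Fin m, (q : ℝ≥0∞) * volume (U ∩ seg i) := hdouble
    _ = (q : ℝ≥0∞) * ∑ i : Fin m, volume (U ∩ seg i) := by rw [Finset.mul_sum]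
    _ ≤ (q : ℝ≥0∞) * volume U := by
        exact mul_le_mul_right hdisj _
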